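/- Let S be a set with |S| = 3. There exist three rs functions f_1, f_2, f_3 over S, each both union-subadditive and intersection-subadditive (i.e., each in M(S)), such that every function g : 2^S → 2^S can be written as a composition of functions taken from {f_1, f_2, f_3}; i.e., three members of M(S) form a complete set of generating functions under composition for the set of all rs functions over S. -/

import Mathlib

namespace Stmt13Aux

abbrev B := Fin 3 → Bool
def enc (v : B) : Fin 8 := (if v 0 then 1 else 0) + (if v 1 then 2 else 0) + (if v 2 then 4 else 0)
def dec (n : Fin 8) : B := fun i => n.val.testBit i.val
def tbl (t : Fin 8 → Fin 8) : B → B := fun v => dec (t (enc v))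
def F1 : B → B := tbl ![1,4,7,6,3,2,5,0]
def F1i : B → B := tbl ![7,0,5,4,1,6,3,2]
def F2 : B → B := tbl ![0,1,7,3,4,5,6,2]
def F3 : B → B := tbl ![0,1,2,3,4,5,6,0]

lemma hF1a : ∀ x, F1i (F1 x) = x := by decide
lemma hF1b : ∀ x, F1 (F1i x) = x := by decide
lemma hF2a : ∀ x, F2 (F2 x) = x := by decide
def σp : Equiv.Perm B := ⟨F1, F1i, hF1a, hF1b⟩
def τp : Equiv.Perm B := ⟨F2, F2, hF2a, hF2a⟩

def Gset : Set (B → B) := {F1, F2, F3}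
def Reach (G : B → B) : Prop :=
  ∃ l : List (B → B), l ≠ [] ∧ (∀ h ∈ l, h ∈ Gset) ∧ G = l.foldr (· ∘ ·) id

lemma reach_mem {F : B → B} (h : F ∈ Gset) : Reach F :=
  ⟨[F], by simp, by simpa using h, rfl⟩

lemma foldr_append (l₁ l₂ : List (B → B)) :
    (l₁ ++ l₂).foldr (· ∘ ·) id = l₁.foldr (· ∘ ·) id ∘ l₂.foldr (· ∘ ·) id := by
  induction l₁ with
  | nil => rfl
  | cons h t ih => simp [List.foldr_cons, ih, Function.comp_assoc]

lemma reach_comp {G H : B → B} (hG : Reach G) (hH : Reach H) : Reach (G ∘ H) := by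
  obtain ⟨l₁, h1, m1, e1⟩ := hG
  obtain ⟨l₂, h2, m2, e2⟩ := hH
  refine ⟨l₁ ++ l₂, by simp [h1], ?_, by rw [foldr_append, ← e1, ← e2]⟩
  intro h hh
  rcases List.mem_append.mp hh with h' | h'
  · exact m1 h h'
  · exact m2 h h'

lemma reach_pow {G : B → B} (hG : Reach G) : ∀ n : ℕ, Reach (G^[n + 1]) := by
  intro n
  induction n with
  | zero => simpa using hG
  | succ n ih =>
    have h2 := reach_comp hG ih
    have : G^[n + 1 + 1] = G ∘ G^[n + 1] := Function.iterate_succ' G (n+1)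
    rwa [this]

lemma sigma_iter : ∀ y : B, ∃ n : Fin 8, F1^[n.val] (dec 0) = y := by decide

lemma perm_pow_apply (π : Equiv.Perm B) (n : ℕ) (x : B) : (π ^ n) x = (⇑π)^[n] x := by
  induction n with
  | zero => rfl
  | succ n ih => rw [pow_succ', Equiv.Perm.mul_apply, Function.iterate_succ_apply', ih]

lemma hcyc : σp.IsCycle := by
  refine ⟨dec 0, by decide, fun y _ => ?_⟩
  obtain ⟨n, hn⟩ := sigma_iter y
  exact ⟨(n.val : ℤ), by rw [zpow_natCast, perm_pow_apply]; exact hn⟩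

lemma hsup : σp.support = Finset.univ := by decide

lemma hτ : τp = Equiv.swap (dec 2) (σp (dec 2)) := by
  apply Equiv.ext
  have h : ∀ v, τp v = Equiv.swap (dec 2) (σp (dec 2)) v := by decide
  exact h

lemma clos : Subgroup.closure {σp, Equiv.swap (dec 2) (σp (dec 2))} = ⊤ :=
  Equiv.Perm.closure_cycle_adjacent_swap hcyc hsup (dec 2)

lemma reach_perm_pow {π : Equiv.Perm B} (h : Reach ⇑π) (n : ℕ) : Reach ⇑(π ^ (n + 1)) := by
  have h2 := reach_pow h n
  have h3 : ⇑(π ^ (n + 1)) = (⇑π)^[n + 1] := funext fun x => perm_pow_apply π (n+1) x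
  rwa [h3]

set_option maxRecDepth 100000 in
lemma reach_id : Reach id := by
  have h : ⇑(σp ^ (7 + 1)) = id := by
    funext x
    rw [perm_pow_apply]
    revert x; decide
  have := reach_perm_pow (π := σp) (reach_mem (by simp [Gset]; left; rfl)) 7
  rwa [h] at this

lemma reach_inv {π : Equiv.Perm B} (h : Reach ⇑π) : Reach ⇑π⁻¹ := by
  have hpos : 0 < orderOf π := orderOf_pos π
  obtain ⟨m, hm⟩ : ∃ m, 2 * orderOf π - 1 = m + 1 := ⟨2 * orderOf π - 2, by omega⟩
  have key : π⁻¹ = π ^ (m + 1) := by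
    have h1 : π * π ^ (m + 1) = 1 := by
      rw [← pow_succ']
      have : m + 1 + 1 = 2 * orderOf π := by omega
      rw [this, pow_mul', pow_orderOf_eq_one, one_pow]
    exact inv_eq_of_mul_eq_one_right h1
  rw [key]
  exact reach_perm_pow h m

lemma perm_reach (π : Equiv.Perm B) : Reach ⇑π := by
  have hmem : π ∈ Subgroup.closure {σp, Equiv.swap (dec 2) (σp (dec 2))} := by
    rw [clos]; exact Subgroup.mem_top π
  induction hmem using Subgroup.closure_induction with
  | mem x hx =>
    rcases hx with h | h
    · subst h; exact reach_mem (by simp [Gset]; left; rfl)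
    · rw [← hτ] at h; subst h; exact reach_mem (by simp [Gset]; right; left; rfl)
  | one => simpa using reach_id
  | mul x y hx hy ihx ihy => simpa using reach_comp ihx ihy
  | inv x hx ihx => exact reach_inv ihx

def colim (u v : B) : B → B := fun x => if x = u then v else x

lemma F3_eq : F3 = colim (dec 7) (dec 0) := by
  funext x
  have h : ∀ x, F3 x = colim (dec 7) (dec 0) x := by decide
  exact h x

lemma conj_colim (π : Equiv.Perm B) (a b u v : B) (ha : π a = u) (hb : π b = v) :
    ⇑π ∘ colim a b ∘ ⇑π⁻¹ = colim u v := by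
  funext x
  by_cases hx : x = u
  · have h1 : π⁻¹ u = a := by rw [← ha, Equiv.Perm.inv_def]; exact π.symm_apply_apply a
    rw [Equiv.Perm.inv_def] at h1
    simp [colim, h1, hb, hx]
  · have h1 : π⁻¹ x ≠ a := by
      intro hc
      apply hx
      rw [← ha, ← hc, Equiv.Perm.inv_def, π.apply_symm_apply]
    rw [Equiv.Perm.inv_def] at h1
    simp [colim, h1, π.apply_symm_apply, hx]

lemma reach_colim {u v : B} (h : u ≠ v) : Reach (colim u v) := by
  have hd : dec 7 ≠ dec 0 := by decide
  set s1 : Equiv.Perm B := Equiv.swap (dec 7) u with hs1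
  set π : Equiv.Perm B := Equiv.swap (s1 (dec 0)) v * s1 with hπ
  have ha : π (dec 7) = u := by
    have h1 : s1 (dec 7) = u := Equiv.swap_apply_left _ _
    have h2 : s1 (dec 0) ≠ u := by
      rw [← h1]; exact fun hc => hd.symm (s1.injective hc)
    rw [hπ, Equiv.Perm.mul_apply, h1]
    exact Equiv.swap_apply_of_ne_of_ne (fun hc => h2 hc.symm) h
  have hb : π (dec 0) = v := by
    rw [hπ, Equiv.Perm.mul_apply]
    exact Equiv.swap_apply_left _ _
  have := conj_colim π (dec 7) (dec 0) u v ha hb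
  rw [← this, ← F3_eq]
  exact reach_comp (perm_reach π) (reach_comp (reach_mem (by simp [Gset]))
    (perm_reach π⁻¹))

lemma cardB : Fintype.card B = 8 := by simp [Fintype.card_fun]

lemma reach_of_surj {G : B → B} (hs : Function.Surjective G) : Reach G := by
  have hb : Function.Bijective G := Finite.surjective_iff_bijective.mp hs
  have : G = ⇑(Equiv.ofBijective G hb) := rfl
  rw [this]
  exact perm_reach _

lemma reach_all (G : B → B) : Reach G := by
  suffices H : ∀ n (G : B → B), 8 - (Finset.image G Finset.univ).card ≤ n → Reach G from
    H 8 G (Nat.sub_le 8 _)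
  intro n
  induction n with
  | zero =>
    intro G hG
    have hle : (Finset.image G Finset.univ).card ≤ 8 := by
      calc (Finset.image G Finset.univ).card ≤ Finset.univ.card := Finset.card_image_le
      _ = 8 := by rw [Finset.card_univ, cardB]
    have hcard : (Finset.image G Finset.univ).card = 8 := by omega
    apply reach_of_surj
    intro y
    have : Finset.image G Finset.univ = Finset.univ :=
      Finset.eq_univ_of_card _ (by rw [hcard, cardB])
    have hy : y ∈ Finset.image G Finset.univ := by rw [this]; exact Finset.mem_univ y
    obtain ⟨x, _, hx⟩ := Finset.mem_image.mp hy
    exact ⟨x, hx⟩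
  | succ n ih =>
    intro G hG
    by_cases hs : Function.Surjective G
    · exact reach_of_surj hs
    · have hs' : ¬ ∀ b, ∃ a, G a = b := hs
      push_neg at hs'
      obtain ⟨c, hc⟩ := hs'
      have hni : ¬ Function.Injective G := fun hinj =>
        hs (Finite.injective_iff_bijective.mp hinj).2
      obtain ⟨a, b, hGab, hab⟩ := Function.not_injective_iff.mp hni
      set G' := Function.update G a c with hG'
      have hG'a : G' a = c := Function.update_self a c G
      have hG'x : ∀ x, x ≠ a → G' x = G x := fun x hx => Function.update_of_ne hx c G
      have hsub : insert c (Finset.image G Finset.univ) ⊆ Finset.image G' Finset.univ := by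
        intro y hy
        rcases Finset.mem_insert.mp hy with h | h
        · subst h
          exact Finset.mem_image.mpr ⟨a, Finset.mem_univ a, hG'a⟩
        · obtain ⟨x, _, hx⟩ := Finset.mem_image.mp h
          by_cases hxa : x = a
          · subst hxa
            refine Finset.mem_image.mpr ⟨b, Finset.mem_univ b, ?_⟩
            rw [hG'x b (Ne.symm hab), ← hGab, hx]
          · exact Finset.mem_image.mpr ⟨x, Finset.mem_univ x, by rw [hG'x x hxa, hx]⟩
      have hcn : c ∉ Finset.image G Finset.univ := by
        simp only [Finset.mem_image]
        rintro ⟨x, -, hx⟩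
        exact hc x hx
      have hcard : (Finset.image G Finset.univ).card + 1 ≤ (Finset.image G' Finset.univ).card := by
        have h2 := Finset.card_le_card hsub
        rwa [Finset.card_insert_of_notMem hcn] at h2
      have hG'card : 8 - (Finset.image G' Finset.univ).card ≤ n := by omega
      have hreach' := ih G' hG'card
      have hdecomp : G = G' ∘ colim a b := by
        funext x
        by_cases hxa : x = a
        · have h1 : colim a b x = b := by rw [hxa]; exact if_pos rfl
          simp only [Function.comp_apply, h1]
          rw [hG'x b (Ne.symm hab), hxa]
          exact hGab
        · have h1 : colim a b x = x := if_neg hxa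
          simp only [Function.comp_apply, h1]
          rw [hG'x x hxa]
      rw [hdecomp]
      exact reach_comp hreach' (reach_colim hab)

lemma hU1 : ∀ x y : B, ∀ i, F1 (fun k => x k || y k) i = true → (F1 x i || F1 y i) = true := by decide
lemma hI1 : ∀ x y : B, ∀ i, F1 (fun k => x k && y k) i = true → (F1 x i || F1 y i) = true := by decide
lemma hU2 : ∀ x y : B, ∀ i, F2 (fun k => x k || y k) i = true → (F2 x i || F2 y i) = true := by decide
lemma hI2 : ∀ x y : B, ∀ i, F2 (fun k => x k && y k) i = true → (F2 x i || F2 y i) = true := by decide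
lemma hU3 : ∀ x y : B, ∀ i, F3 (fun k => x k || y k) i = true → (F3 x i || F3 y i) = true := by decide
lemma hI3 : ∀ x y : B, ∀ i, F3 (fun k => x k && y k) i = true → (F3 x i || F3 y i) = true := by decide

end Stmt13Aux

open Classical

/-- `f` is union-subadditive: `f (X ∪ Y) ⊆ f X ∪ f Y` for all `X, Y ⊆ S`. -/
def unionSub {S : Type*} (f : Set S → Set S) : Prop :=
  ∀ X Y : Set S, f (X ∪ Y) ⊆ f X ∪ f Y

/-- `f` is intersection-subadditive: `f (X ∩ Y) ⊆ f X ∪ f Y` for all `X, Y ⊆ S`. -/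
def interSub {S : Type*} (f : Set S → Set S) : Prop :=
  ∀ X Y : Set S, f (X ∩ Y) ⊆ f X ∪ f Y

theorem stmt13 {S : Type*} [Fintype S] (hS : Fintype.card S = 3) :
    ∃ f₁ f₂ f₃ : Set S → Set S,
      (unionSub f₁ ∧ interSub f₁) ∧ (unionSub f₂ ∧ interSub f₂) ∧
      (unionSub f₃ ∧ interSub f₃) ∧
      ∀ g : Set S → Set S, ∃ l : List (Set S → Set S), l ≠ [] ∧
        (∀ h ∈ l, h ∈ ({f₁, f₂, f₃} : Set (Set S → Set S))) ∧
        g = l.foldr (· ∘ ·) id := by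
  classical
  open Stmt13Aux in
  obtain ⟨e⟩ : Nonempty (S ≃ Fin 3) := ⟨Fintype.equivFinOfCardEq hS⟩
  set φ : Set S → B := fun X i => decide (e.symm i ∈ X) with hφ
  set ψ : B → Set S := fun v => {s | v (e s) = true} with hψ
  have hψφ : ∀ X, ψ (φ X) = X := by
    intro X
    ext s
    simp [hφ, hψ, Set.mem_setOf_eq, e.symm_apply_apply, decide_eq_true_eq]
  have hφψ : ∀ v, φ (ψ v) = v := by
    intro v
    funext i
    simp only [hφ, hψ, Set.mem_setOf_eq, e.apply_symm_apply]
    cases h : v i <;> simp [h]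
  have hφunion : ∀ X Y : Set S, φ (X ∪ Y) = fun i => φ X i || φ Y i := by
    intro X Y
    funext i
    simp only [hφ, Set.mem_union]
    by_cases h1 : e.symm i ∈ X <;> by_cases h2 : e.symm i ∈ Y <;> simp [h1, h2]
  have hφinter : ∀ X Y : Set S, φ (X ∩ Y) = fun i => φ X i && φ Y i := by
    intro X Y
    funext i
    simp only [hφ, Set.mem_inter_iff]
    by_cases h1 : e.symm i ∈ X <;> by_cases h2 : e.symm i ∈ Y <;> simp [h1, h2]
  set T : (B → B) → Set S → Set S := fun F X => ψ (F (φ X)) with hT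
  have husub : ∀ F : B → B,
      (∀ x y : B, ∀ i, F (fun k => x k || y k) i = true → (F x i || F y i) = true) →
      unionSub (T F) := by
    intro F hF X Y s hs
    have hs' : F (φ (X ∪ Y)) (e s) = true := hs
    rw [hφunion X Y] at hs'
    have := hF (φ X) (φ Y) (e s) hs'
    rcases Bool.or_eq_true_iff.mp this with h | h
    · exact Or.inl h
    · exact Or.inr h
  have hisub : ∀ F : B → B,
      (∀ x y : B, ∀ i, F (fun k => x k && y k) i = true → (F x i || F y i) = true) →
      interSub (T F) := by
    intro F hF X Y s hs
    have hs' : F (φ (X ∩ Y)) (e s) = true := hs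
    rw [hφinter X Y] at hs'
    have := hF (φ X) (φ Y) (e s) hs'
    rcases Bool.or_eq_true_iff.mp this with h | h
    · exact Or.inl h
    · exact Or.inr h
  refine ⟨T F1, T F2, T F3, ⟨husub F1 hU1, hisub F1 hI1⟩, ⟨husub F2 hU2, hisub F2 hI2⟩,
    ⟨husub F3 hU3, hisub F3 hI3⟩, ?_⟩
  intro g
  obtain ⟨L, hL, hmem, hfold⟩ := reach_all (fun v => φ (g (ψ v)))
  have hfoldmap : ∀ L' : List (B → B),
      (L'.map T).foldr (· ∘ ·) id = fun X => ψ ((L'.foldr (· ∘ ·) id) (φ X)) := by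
    intro L'
    induction L' with
    | nil =>
      funext X
      simp [hψφ X]
    | cons h t ih =>
      funext X
      simp only [List.map_cons, List.foldr_cons, Function.comp_apply, ih]
      simp only [hT, hφψ]
  refine ⟨L.map T, by simpa using hL, ?_, ?_⟩
  · intro h hh
    obtain ⟨h₀, hh₀, rfl⟩ := List.mem_map.mp hh
    rcases hmem h₀ hh₀ with h' | h' | h'
    · subst h'; exact Or.inl rfl
    · subst h'; exact Or.inr (Or.inl rfl)
    · subst h'; exact Or.inr (Or.inr rfl)
  · rw [hfoldmap L, ← hfold]
    funext X
    simp [hψφ]
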